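/- Let y_0 < y_1 < ⋯ < y_P be real numbers, A = [y_0,y_P], A_p = [y_{p−1},y_p], and let z_0, …, z_P be real numbers. For p = 1,…,P let L_p : A → A_p be a homeomorphism with L_p(y_0) = y_{p−1} and L_p(y_P) = y_p, and let F_p(y,z) = α_p·z + q_p(y) with q_p : A → ℝ continuous, F_p(y_0,z_0) = z_{p−1}, F_p(y_P,z_P) = z_p. Let φ : [0,∞) → [0,∞) be nondecreasing with φ(t) < t and limsup_{s→t⁺} φ(s) < t for all t > 0, and suppose each F_p is a Suzuki-type generalized φ-contraction in the second variable: for all y ∈ A and z,t ∈ ℝ, (1/2)·|z − F_p(y,z)| ≤ |z − t| implies |F_p(y,z) − F_p(y,t)| ≤ φ(max{|z−t|, |z − F_p(y,z)|, |t − F_p(y,t)|}). Then there exists a unique continuous function g : A → ℝ with g(y_0) = z_0 and g(y_P) = z_P satisfying g(y) = F_p(L_p^{−1}(y), g(L_p^{−1}(y))) for all y ∈ A_p and all p = 1,…,P; equivalently, g(L_p(y)) = F_p(y, g(y)) for all y ∈ A and p = 1,…,P. -/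

import Mathlib

open Filter


noncomputable def fifInv (L : ℕ → ℝ → ℝ) (y : ℕ → ℝ) (P : ℕ) (p : ℕ) : ℝ → ℝ :=
  Function.invFunOn (L p) (Set.Icc (y 0) (y P))

noncomputable def fifIdx (y : ℕ → ℝ) (u : ℝ) : ℕ := max 1 (sInf {p : ℕ | u ≤ y p})

noncomputable def fifT (F : ℕ → ℝ → ℝ → ℝ) (L : ℕ → ℝ → ℝ) (y : ℕ → ℝ) (P : ℕ)
    (h : ℝ → ℝ) (u : ℝ) : ℝ :=
  F (fifIdx y u) (fifInv L y P (fifIdx y u) u) (h (fifInv L y P (fifIdx y u) u))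

noncomputable def fifExt (y : ℕ → ℝ) (P : ℕ) (f : C(Set.Icc (y 0) (y P), ℝ)) (u : ℝ) : ℝ :=
  if hu : u ∈ Set.Icc (y 0) (y P) then f ⟨u, hu⟩ else 0


lemma fif_aux_abs_lt_one (a c : ℝ) (φ : ℝ → ℝ) (hφ_lt : ∀ t > 0, φ t < t)
    (h : ∀ s t : ℝ, (1/2) * |s - (a*s + c)| ≤ |s - t| →
      |(a*s + c) - (a*t + c)| ≤ φ (max |s - t| (max |s - (a*s + c)| |t - (a*t + c)|))) :
    |a| < 1 := by
  by_cases ha : a = 1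
  · -- a = 1 : contradiction
    exfalso
    subst ha
    have hc2 : (1/2 : ℝ) * |(0:ℝ) - (1*0 + c)| ≤ |(0:ℝ) - (|c| + 1)| := by
      have h1 : |(0:ℝ) - (1*0 + c)| = |c| := by simp [abs_neg]
      have h2 : |(0:ℝ) - (|c| + 1)| = |c| + 1 := by
        rw [zero_sub, abs_neg, abs_of_pos (by positivity)]
      rw [h1, h2]
      have := abs_nonneg c
      linarith
    have := h 0 (|c| + 1) hc2
    have e1 : |(0:ℝ) - (1*0 + c)| = |c| := by simp [abs_neg]
    have e2 : |(0:ℝ) - (|c| + 1)| = |c| + 1 := by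
      rw [zero_sub, abs_neg, abs_of_pos (by positivity)]
    have e3 : |(1*0 + c) - (1*(|c|+1) + c)| = |c| + 1 := by
      have : (1*0 + c) - (1*(|c|+1) + c) = -(|c|+1) := by ring
      rw [this, abs_neg, abs_of_pos (by positivity)]
    have e4 : |(|c|+1) - (1*(|c|+1) + c)| = |c| := by
      have : (|c|+1) - (1*(|c|+1) + c) = -c := by ring
      rw [this, abs_neg]
    rw [e1, e2, e3, e4] at this
    have hmax : max (|c|+1) (max |c| |c|) = |c| + 1 := by
      rw [max_self]
      exact max_eq_left (by have := abs_nonneg c; linarith)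
    rw [hmax] at this
    have := hφ_lt (|c|+1) (by positivity)
    linarith
  · have hne : (1:ℝ) - a ≠ 0 := sub_ne_zero.mpr (Ne.symm ha)
    set zz : ℝ := c / (1 - a) with hzz
    have hz : a * zz + c = zz := by rw [hzz, mul_div_assoc', div_add' _ _ _ hne, div_left_inj' hne]; ring
    have key : ∀ u v : ℝ, (1/2) * (|1-a| * |u|) ≤ |u - v| →
        |a| * |u-v| ≤ φ (max |u-v| (max (|1-a| * |u|) (|1-a| * |v|))) := by
      intro u v hcond
      have e1 : (zz+u) - (a*(zz+u) + c) = (1-a)*u := by linear_combination -hz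
      have e2 : (zz+v) - (a*(zz+v) + c) = (1-a)*v := by linear_combination -hz
      have e3 : (a*(zz+u) + c) - (a*(zz+v) + c) = a*(u-v) := by ring
      have e4 : (zz+u) - (zz+v) = u - v := by ring
      have := h (zz+u) (zz+v) (by rw [e1, e4, abs_mul]; exact hcond)
      rwa [e1, e2, e3, e4, abs_mul, abs_mul, abs_mul] at this
    by_cases hb : |1 - a| ≤ 4
    · -- take u = 1, v = -1
      have k1 := key 1 (-1) (by rw [abs_one, mul_one]; norm_num; linarith)
      have e5 : |(1:ℝ) - (-1)| = 2 := by norm_num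
      rw [e5] at k1
      simp only [abs_one, abs_neg, mul_one, max_self] at k1
      by_contra hcon
      push_neg at hcon
      set M := max (2:ℝ) |1-a| with hM
      have hMpos : 0 < M := lt_of_lt_of_le (by norm_num) (le_max_left _ _)
      have hφM := hφ_lt M hMpos
      have h1a : |1 - a| ≤ 1 + |a| := by
        calc |1 - a| ≤ |(1:ℝ)| + |a| := abs_sub _ _
        _ = 1 + |a| := by rw [abs_one]
      have hMle : M ≤ 2 * |a| := max_le (by linarith) (by linarith)
      linarith
    · -- |1-a| > 4 : contradiction
      exfalso
      push_neg at hb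
      set b := |1 - a| with hbdef
      set k := b/2 - 1 with hk
      have hk1 : 1 < k := by simp [hk]; linarith
      have hcond : (1/2) * (b * |(1:ℝ)|) ≤ |(1:ℝ) - (-k)| := by
        rw [abs_one, mul_one]
        have : |(1:ℝ) - (-k)| = 1 + k := by rw [sub_neg_eq_add, abs_of_pos (by linarith)]
        rw [this, hk]; linarith
      have k1 := key 1 (-k) hcond
      have e5 : |(1:ℝ) - (-k)| = 1 + k := by rw [sub_neg_eq_add, abs_of_pos (by linarith)]
      have e6 : |(-k : ℝ)| = k := by rw [abs_neg, abs_of_pos (by linarith)]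
      rw [e5, abs_one, e6, mul_one] at k1
      have hbpos : (0:ℝ) < b := by linarith
      have hmax : max (1+k) (max b (b*k)) = b * k := by
        have h1 : b ≤ b * k := le_mul_of_one_le_right (le_of_lt hbpos) (by linarith)
        have h2 : 1 + k ≤ b * k := by nlinarith
        rw [max_eq_right h1, max_eq_right h2]
      rw [hmax] at k1
      have hφbk := hφ_lt (b*k) (by positivity)
      have h1a : b ≤ 1 + |a| := by
        calc |1 - a| ≤ |(1:ℝ)| + |a| := abs_sub _ _
        _ = 1 + |a| := by rw [abs_one]
      -- |a| * (1+k) ≤ φ(bk) < bk = b*(b/2-1), 1+k = b/2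
      have habs : (0:ℝ) ≤ |a| := abs_nonneg a
      have h5 : |a| * (1+k) < b*k := lt_of_le_of_lt k1 hφbk
      rw [hk] at h5
      have h9 : b/2 * (b-1) ≤ b/2 * |a| :=
        mul_le_mul_of_nonneg_left (by linarith) (by linarith)
      nlinarith [h9, h5]

lemma fif_aux_glue {f : ℝ → ℝ} {s t : Set ℝ} (hs : IsClosed s) (ht : IsClosed t)
    (hfs : ContinuousOn f s) (hft : ContinuousOn f t) : ContinuousOn f (s ∪ t) := by
  intro x hx
  have hcs : x ∉ s → ContinuousWithinAt f s x := fun hxs =>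
    continuousWithinAt_of_notMem_closure (by rwa [hs.closure_eq])
  have hct : x ∉ t → ContinuousWithinAt f t x := fun hxt =>
    continuousWithinAt_of_notMem_closure (by rwa [ht.closure_eq])
  rcases hx with hx | hx
  · refine (hfs x hx).union ?_
    by_cases hxt : x ∈ t
    · exact hft x hxt
    · exact hct hxt
  · refine ContinuousWithinAt.union ?_ (hft x hx)
    by_cases hxs : x ∈ s
    · exact hfs x hxs
    · exact hcs hxs

/-- Theorem 3.12 of the paper: existence and uniqueness of the fractal
interpolation function generated by an IFS whose maps
`F_p(y,z) = α_p z + q_p(y)` are Suzuki-type generalized φ-contractions in the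
second variable. There is a unique continuous `g : A → ℝ` with `g(y_0) = z_0`,
`g(y_P) = z_P` and `g(L_p(x)) = F_p(x, g(x))` for all `x ∈ A`, `p = 1,…,P`. -/
theorem exists_unique_FIF_stgpc (P : ℕ) (hP : 1 ≤ P)
    (y z : ℕ → ℝ) (hy : ∀ i < P, y i < y (i + 1))
    (L : ℕ → ℝ → ℝ) (α : ℕ → ℝ) (q : ℕ → ℝ → ℝ) (F : ℕ → ℝ → ℝ → ℝ)
    (hF : ∀ p x t, F p x t = α p * t + q p x)
    (hq : ∀ p ∈ Finset.Icc 1 P, ContinuousOn (q p) (Set.Icc (y 0) (y P)))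
    (hLbij : ∀ p ∈ Finset.Icc 1 P,
      Set.BijOn (L p) (Set.Icc (y 0) (y P)) (Set.Icc (y (p - 1)) (y p)))
    (hLcont : ∀ p ∈ Finset.Icc 1 P, ContinuousOn (L p) (Set.Icc (y 0) (y P)))
    (hLend : ∀ p ∈ Finset.Icc 1 P, L p (y 0) = y (p - 1) ∧ L p (y P) = y p)
    (hFend : ∀ p ∈ Finset.Icc 1 P, F p (y 0) (z 0) = z (p - 1) ∧ F p (y P) (z P) = z p)
    (φ : ℝ → ℝ) (hφ_mono : Monotone φ)
    (hφ_nonneg : ∀ t ≥ 0, 0 ≤ φ t)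
    (hφ_lt : ∀ t > 0, φ t < t)
    (hφ_limsup : ∀ t > 0, Filter.limsup φ (nhdsWithin t (Set.Ioi t)) < t)
    (hSuz : ∀ p ∈ Finset.Icc 1 P, ∀ x ∈ Set.Icc (y 0) (y P), ∀ s t : ℝ,
      (1 / 2) * |s - F p x s| ≤ |s - t| →
        |F p x s - F p x t| ≤
          φ (max |s - t| (max |s - F p x s| |t - F p x t|))) :
    ∃ g : ℝ → ℝ,
      (ContinuousOn g (Set.Icc (y 0) (y P)) ∧ g (y 0) = z 0 ∧ g (y P) = z P ∧
        ∀ p ∈ Finset.Icc 1 P, ∀ x ∈ Set.Icc (y 0) (y P), g (L p x) = F p x (g x)) ∧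
      ∀ g' : ℝ → ℝ,
        (ContinuousOn g' (Set.Icc (y 0) (y P)) ∧ g' (y 0) = z 0 ∧ g' (y P) = z P ∧
          ∀ p ∈ Finset.Icc 1 P, ∀ x ∈ Set.Icc (y 0) (y P), g' (L p x) = F p x (g' x)) →
        Set.EqOn g' g (Set.Icc (y 0) (y P)) := by
  classical
  -- unbundled hypotheses
  have hbij : ∀ p, 1 ≤ p → p ≤ P →
      Set.BijOn (L p) (Set.Icc (y 0) (y P)) (Set.Icc (y (p - 1)) (y p)) :=
    fun p h1 h2 => hLbij p (Finset.mem_Icc.mpr ⟨h1, h2⟩)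
  have hcontL : ∀ p, 1 ≤ p → p ≤ P → ContinuousOn (L p) (Set.Icc (y 0) (y P)) :=
    fun p h1 h2 => hLcont p (Finset.mem_Icc.mpr ⟨h1, h2⟩)
  have hendL : ∀ p, 1 ≤ p → p ≤ P → L p (y 0) = y (p - 1) ∧ L p (y P) = y p :=
    fun p h1 h2 => hLend p (Finset.mem_Icc.mpr ⟨h1, h2⟩)
  have hFendr : ∀ p, 1 ≤ p → p ≤ P → F p (y 0) (z 0) = z (p - 1) ∧ F p (y P) (z P) = z p :=
    fun p h1 h2 => hFend p (Finset.mem_Icc.mpr ⟨h1, h2⟩)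
  have hqc : ∀ p, 1 ≤ p → p ≤ P → ContinuousOn (q p) (Set.Icc (y 0) (y P)) :=
    fun p h1 h2 => hq p (Finset.mem_Icc.mpr ⟨h1, h2⟩)
  -- monotonicity
  have ymono : ∀ j, j ≤ P → ∀ i, i ≤ j → y i ≤ y j := by
    intro j
    induction j with
    | zero => intro _ i hi; rw [Nat.le_zero.mp hi]
    | succ n ih =>
      intro hn i hi
      rcases Nat.lt_succ_iff_lt_or_eq.mp (Nat.lt_succ_of_le hi) with h | h
      · have h1 : y i ≤ y n := ih (by omega) i (by omega)
        have h2 := hy n (by omega)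
        linarith
      · rw [h]
  have ystrict : ∀ i j, i < j → j ≤ P → y i < y j := by
    intro i j hij hjP
    have h1 : y i ≤ y (j - 1) := ymono (j - 1) (by omega) i (by omega)
    have h2 : y (j - 1) < y j := by
      have := hy (j - 1) (by omega)
      have hj : j - 1 + 1 = j := by omega
      rwa [hj] at this
    linarith
  have hy0P : y 0 < y P := ystrict 0 P (by omega) le_rfl
  have hy0K : y 0 ∈ Set.Icc (y 0) (y P) := ⟨le_rfl, le_of_lt hy0P⟩
  have hyPK : y P ∈ Set.Icc (y 0) (y P) := ⟨le_of_lt hy0P, le_rfl⟩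
  have hApK : ∀ p, 1 ≤ p → p ≤ P →
      Set.Icc (y (p - 1)) (y p) ⊆ Set.Icc (y 0) (y P) := by
    intro p h1 h2
    exact Set.Icc_subset_Icc (ymono (p - 1) (by omega) 0 (by omega)) (ymono P le_rfl p h2)
  -- inverse maps
  have hinv_left : ∀ p, 1 ≤ p → p ≤ P → ∀ x ∈ Set.Icc (y 0) (y P),
      fifInv L y P p (L p x) = x :=
    fun p h1 h2 x hx => (hbij p h1 h2).injOn.leftInvOn_invFunOn hx
  have hinv_memK : ∀ p, 1 ≤ p → p ≤ P → ∀ u ∈ Set.Icc (y (p - 1)) (y p),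
      fifInv L y P p u ∈ Set.Icc (y 0) (y P) ∧ L p (fifInv L y P p u) = u := by
    intro p h1 h2 u hu
    obtain ⟨x, hx, hxe⟩ := (hbij p h1 h2).surjOn hu
    exact ⟨Function.invFunOn_mem ⟨x, hx, hxe⟩, Function.invFunOn_eq ⟨x, hx, hxe⟩⟩
  -- idx properties
  have hidx : ∀ u : ℝ, y 0 ≤ u → u ≤ y P →
      1 ≤ fifIdx y u ∧ fifIdx y u ≤ P ∧ y (fifIdx y u - 1) ≤ u ∧ u ≤ y (fifIdx y u) := by
    intro u h0 hP'
    have hPmem : P ∈ {p : ℕ | u ≤ y p} := hP'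
    have hne : {p : ℕ | u ≤ y p}.Nonempty := ⟨P, hPmem⟩
    have hsle : sInf {p : ℕ | u ≤ y p} ≤ P := Nat.sInf_le hPmem
    by_cases h0' : sInf {p : ℕ | u ≤ y p} = 0
    · have hidx1 : fifIdx y u = 1 := by unfold fifIdx; rw [h0']; simp
      have h0mem : (0 : ℕ) ∈ {p : ℕ | u ≤ y p} := by
        have := Nat.sInf_mem hne; rwa [h0'] at this
      have huy0 : u ≤ y 0 := h0mem
      rw [hidx1]
      exact ⟨le_rfl, hP, h0, le_trans huy0 (ymono 1 hP 0 (by omega))⟩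
    · have hpos : 1 ≤ sInf {p : ℕ | u ≤ y p} := Nat.one_le_iff_ne_zero.mpr h0'
      have hidxeq : fifIdx y u = sInf {p : ℕ | u ≤ y p} := max_eq_right hpos
      have hmem : u ≤ y (sInf {p : ℕ | u ≤ y p}) := Nat.sInf_mem hne
      have hnot : sInf {p : ℕ | u ≤ y p} - 1 ∉ {p : ℕ | u ≤ y p} :=
        Nat.notMem_of_lt_sInf (by omega)
      have hlt : y (sInf {p : ℕ | u ≤ y p} - 1) < u := not_le.mp hnot
      rw [hidxeq]
      exact ⟨hpos, hsle, le_of_lt hlt, hmem⟩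
  -- contraction factor
  have halpha : ∀ p, 1 ≤ p → p ≤ P → |α p| < 1 := by
    intro p h1 h2
    apply fif_aux_abs_lt_one (α p) (q p (y 0)) φ hφ_lt
    intro s t hst
    have h' := hSuz p (Finset.mem_Icc.mpr ⟨h1, h2⟩) (y 0) hy0K s t
    simp only [hF] at h'
    exact h' hst
  obtain ⟨c, hc0, hc1, hcb⟩ : ∃ c : ℝ, 0 ≤ c ∧ c < 1 ∧ ∀ p, 1 ≤ p → p ≤ P → |α p| ≤ c := by
    have hne : (Finset.Icc 1 P).Nonempty := ⟨1, Finset.mem_Icc.mpr ⟨le_rfl, hP⟩⟩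
    refine ⟨(Finset.Icc 1 P).sup' hne (fun p => |α p|), ?_, ?_, ?_⟩
    · exact le_trans (abs_nonneg (α 1)) (Finset.le_sup' (fun p => |α p|) (Finset.mem_Icc.mpr ⟨le_rfl, hP⟩))
    · exact (Finset.sup'_lt_iff hne).mpr fun p hp => by
        obtain ⟨h1, h2⟩ := Finset.mem_Icc.mp hp; exact halpha p h1 h2
    · exact fun p h1 h2 => Finset.le_sup' (fun p => |α p|) (Finset.mem_Icc.mpr ⟨h1, h2⟩)
  -- key agreement lemma
  have hkey : ∀ (h : ℝ → ℝ), h (y 0) = z 0 → h (y P) = z P →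
      ∀ p p' u, 1 ≤ p → p ≤ P → 1 ≤ p' → p' ≤ P → p ≤ p' →
      u ∈ Set.Icc (y (p - 1)) (y p) → u ∈ Set.Icc (y (p' - 1)) (y p') →
      F p' (fifInv L y P p' u) (h (fifInv L y P p' u)) =
        F p (fifInv L y P p u) (h (fifInv L y P p u)) := by
    intro h h0 hPe p p' u hp1 hpP hp'1 hp'P hpp' hu hu'
    rcases eq_or_lt_of_le hpp' with rfl | hlt
    · rfl
    · have h3 : y p ≤ y (p' - 1) := ymono (p' - 1) (by omega) p (by omega)
      have h4 : u = y p := le_antisymm hu.2 (le_trans h3 hu'.1)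
      have h6 : p = p' - 1 := by
        by_contra hcon
        have : y p < y (p' - 1) := ystrict p (p' - 1) (by omega) (by omega)
        linarith [hu'.1, hu.2]
      have e1 : fifInv L y P p u = y P := by
        rw [h4, ← (hendL p hp1 hpP).2]
        exact hinv_left p hp1 hpP (y P) hyPK
      have e2 : fifInv L y P p' u = y 0 := by
        have h5 : u = y (p' - 1) := le_antisymm (by rw [h4]; exact h3) hu'.1
        rw [h5, ← (hendL p' hp'1 hp'P).1]
        exact hinv_left p' hp'1 hp'P (y 0) hy0K
      rw [e1, e2, h0, hPe, (hFendr p hp1 hpP).2, (hFendr p' hp'1 hp'P).1, h6]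
  have hagree : ∀ (h : ℝ → ℝ), h (y 0) = z 0 → h (y P) = z P →
      ∀ p u, 1 ≤ p → p ≤ P → u ∈ Set.Icc (y (p - 1)) (y p) →
      fifT F L y P h u = F p (fifInv L y P p u) (h (fifInv L y P p u)) := by
    intro h h0 hPe p u hp1 hpP hu
    have huK : u ∈ Set.Icc (y 0) (y P) := hApK p hp1 hpP hu
    obtain ⟨hi1, hiP, hil, hir⟩ := hidx u huK.1 huK.2
    have hu' : u ∈ Set.Icc (y (fifIdx y u - 1)) (y (fifIdx y u)) := ⟨hil, hir⟩
    rcases le_total p (fifIdx y u) with hle | hle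
    · exact hkey h h0 hPe p _ u hp1 hpP hi1 hiP hle hu hu'
    · exact (hkey h h0 hPe _ p u hi1 hiP hp1 hpP hle hu' hu).symm
  -- endpoint values of the operator
  have hTend : ∀ (h : ℝ → ℝ), h (y 0) = z 0 → h (y P) = z P →
      fifT F L y P h (y 0) = z 0 ∧ fifT F L y P h (y P) = z P := by
    intro h h0 hPe
    constructor
    · have hm : y 0 ∈ Set.Icc (y (1 - 1)) (y 1) := ⟨le_rfl, ymono 1 hP 0 (by omega)⟩
      rw [hagree h h0 hPe 1 (y 0) le_rfl hP hm]
      have e : fifInv L y P 1 (y 0) = y 0 := by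
        have he := (hendL 1 le_rfl hP).1
        calc fifInv L y P 1 (y 0) = fifInv L y P 1 (L 1 (y 0)) := by rw [he]
        _ = y 0 := hinv_left 1 le_rfl hP (y 0) hy0K
      rw [e, h0]
      exact (hFendr 1 le_rfl hP).1
    · have hm : y P ∈ Set.Icc (y (P - 1)) (y P) :=
        ⟨ymono P le_rfl (P - 1) (by omega), le_rfl⟩
      rw [hagree h h0 hPe P (y P) hP le_rfl hm]
      have e : fifInv L y P P (y P) = y P := by
        have he := (hendL P hP le_rfl).2
        calc fifInv L y P P (y P) = fifInv L y P P (L P (y P)) := by rw [he]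
        _ = y P := hinv_left P hP le_rfl (y P) hyPK
      rw [e, hPe]
      exact (hFendr P hP le_rfl).2
  -- continuity of the inverse maps
  have hinv_cont : ∀ p, 1 ≤ p → p ≤ P →
      ContinuousOn (fifInv L y P p) (Set.Icc (y (p - 1)) (y p)) := by
    intro p h1 h2
    have hbj := hbij p h1 h2
    set f : (Set.Icc (y 0) (y P)) → (Set.Icc (y (p - 1)) (y p)) :=
      fun x => ⟨L p x, hbj.mapsTo x.2⟩ with hf
    have hfc : Continuous f := by
      apply Continuous.subtype_mk
      exact continuousOn_iff_continuous_restrict.mp (hcontL p h1 h2)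
    have hfb : Function.Bijective f := by
      constructor
      · intro x₁ x₂ hx
        exact Subtype.ext (hbj.injOn x₁.2 x₂.2 (congrArg Subtype.val hx))
      · intro u
        obtain ⟨x, hx, hxe⟩ := hbj.surjOn u.2
        exact ⟨⟨x, hx⟩, Subtype.ext hxe⟩
    set e := Equiv.ofBijective f hfb with he
    have hec : Continuous (e : (Set.Icc (y 0) (y P)) → (Set.Icc (y (p - 1)) (y p))) := hfc
    set E := Continuous.homeoOfEquivCompactToT2 (f := e) hec with hE
    rw [continuousOn_iff_continuous_restrict]
    have heq : (Set.Icc (y (p - 1)) (y p)).restrict (fifInv L y P p) =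
        fun u => ((E.symm u : Set.Icc (y 0) (y P)) : ℝ) := by
      funext u
      have h3 : L p ((E.symm u : Set.Icc (y 0) (y P)) : ℝ) = (u : ℝ) := by
        have h4 := E.apply_symm_apply u
        have h5 : (E (E.symm u)) = f (E.symm u) := rfl
        rw [h5] at h4
        exact congrArg Subtype.val h4
      have h6 := hinv_left p h1 h2 _ (E.symm u).2
      rw [h3] at h6
      exact h6
    change Continuous ((Set.Icc (y (p - 1)) (y p)).restrict (fifInv L y P p))
    rw [heq]
    exact continuous_subtype_val.comp E.symm.continuous
  -- continuity of the operator output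
  have hTcont : ∀ (h : ℝ → ℝ), ContinuousOn h (Set.Icc (y 0) (y P)) →
      h (y 0) = z 0 → h (y P) = z P →
      ContinuousOn (fifT F L y P h) (Set.Icc (y 0) (y P)) := by
    intro h hc h0 hPe
    have piece : ∀ p, 1 ≤ p → p ≤ P →
        ContinuousOn (fifT F L y P h) (Set.Icc (y (p - 1)) (y p)) := by
      intro p h1 h2
      have hmaps : ∀ u ∈ Set.Icc (y (p - 1)) (y p),
          fifInv L y P p u ∈ Set.Icc (y 0) (y P) :=
        fun u hu => (hinv_memK p h1 h2 u hu).1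
      have c1 : ContinuousOn (fun u => h (fifInv L y P p u)) (Set.Icc (y (p - 1)) (y p)) :=
        hc.comp (hinv_cont p h1 h2) hmaps
      have c2 : ContinuousOn (fun u => q p (fifInv L y P p u)) (Set.Icc (y (p - 1)) (y p)) :=
        (hqc p h1 h2).comp (hinv_cont p h1 h2) hmaps
      have c3 : ContinuousOn
          (fun u => α p * h (fifInv L y P p u) + q p (fifInv L y P p u))
          (Set.Icc (y (p - 1)) (y p)) :=
        (continuousOn_const.mul c1).add c2
      apply ContinuousOn.congr c3
      intro u hu
      rw [hagree h h0 hPe p u h1 h2 hu, hF]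
    have glue : ∀ n, 1 ≤ n → n ≤ P → ContinuousOn (fifT F L y P h) (Set.Icc (y 0) (y n)) := by
      intro n
      induction n with
      | zero => intro h1; exact absurd h1 (by omega)
      | succ m ih =>
        intro _ hmP
        rcases Nat.eq_zero_or_pos m with rfl | hm
        · have := piece 1 le_rfl hmP
          norm_num at this
          exact this
        · have h1 := ih (by omega) (by omega)
          have h2 := piece (m + 1) (by omega) hmP
          have h3 : (m + 1) - 1 = m := by omega
          rw [h3] at h2
          have h4 := fif_aux_glue isClosed_Icc isClosed_Icc h1 h2
          rwa [Set.Icc_union_Icc_eq_Icc (ymono m (by omega) 0 (by omega))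
            (le_of_lt (hy m (by omega)))] at h4
    exact glue P hP le_rfl
  -- extension of continuous maps on the interval
  have hext_eq : ∀ (f : C(Set.Icc (y 0) (y P), ℝ)) (u : ℝ) (hu : u ∈ Set.Icc (y 0) (y P)),
      fifExt y P f u = f ⟨u, hu⟩ := fun f u hu => dif_pos hu
  have hext_cont : ∀ f : C(Set.Icc (y 0) (y P), ℝ),
      ContinuousOn (fifExt y P f) (Set.Icc (y 0) (y P)) := by
    intro f
    rw [continuousOn_iff_continuous_restrict]
    have heq : (Set.Icc (y 0) (y P)).restrict (fifExt y P f) = ⇑f := by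
      funext u
      exact dif_pos u.2
    change Continuous ((Set.Icc (y 0) (y P)).restrict (fifExt y P f))
    rw [heq]
    exact f.continuous
  -- the complete subspace of continuous maps with pinned endpoints
  set S : Set C(Set.Icc (y 0) (y P), ℝ) :=
    {f | f ⟨y 0, hy0K⟩ = z 0 ∧ f ⟨y P, hyPK⟩ = z P} with hSdef
  have hSclosed : IsClosed S := by
    apply IsClosed.inter
    · exact isClosed_eq (continuous_eval_const _) continuous_const
    · exact isClosed_eq (continuous_eval_const _) continuous_const
  haveI : CompleteSpace S := hSclosed.completeSpace_coe
  -- the RB operator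
  have hTdef : ∀ f : S, ∃ Tf' : S,
      ∀ u : Set.Icc (y 0) (y P), (Tf' : C(Set.Icc (y 0) (y P), ℝ)) u =
        fifT F L y P (fifExt y P f.1) u := by
    intro f
    have h0 : fifExt y P f.1 (y 0) = z 0 := by
      rw [hext_eq f.1 (y 0) hy0K]; exact f.2.1
    have hPe : fifExt y P f.1 (y P) = z P := by
      rw [hext_eq f.1 (y P) hyPK]; exact f.2.2
    have hcont := hTcont (fifExt y P f.1) (hext_cont f.1) h0 hPe
    have hend := hTend (fifExt y P f.1) h0 hPe
    refine ⟨⟨⟨(Set.Icc (y 0) (y P)).restrict (fifT F L y P (fifExt y P f.1)),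
      continuousOn_iff_continuous_restrict.mp hcont⟩, ?_, ?_⟩, fun u => rfl⟩
    · exact hend.1
    · exact hend.2
  choose T hT using hTdef
  -- contraction estimate
  have hdist : ∀ f g : S, dist (T f) (T g) ≤ c * dist f g := by
    intro f g
    rw [Subtype.dist_eq]
    rw [ContinuousMap.dist_le (mul_nonneg hc0 dist_nonneg)]
    intro u
    rw [hT f u, hT g u]
    obtain ⟨hi1, hiP, hil, hir⟩ := hidx (u : ℝ) u.2.1 u.2.2
    have huA : (u : ℝ) ∈ Set.Icc (y (fifIdx y ↑u - 1)) (y (fifIdx y ↑u)) := ⟨hil, hir⟩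
    obtain ⟨hwK, hLw⟩ := hinv_memK _ hi1 hiP _ huA
    have e1 : fifT F L y P (fifExt y P f.1) ↑u =
        α (fifIdx y ↑u) * (f.1 ⟨fifInv L y P (fifIdx y ↑u) ↑u, hwK⟩) +
          q (fifIdx y ↑u) (fifInv L y P (fifIdx y ↑u) ↑u) := by
      unfold fifT
      rw [hF, hext_eq f.1 _ hwK]
    have e2 : fifT F L y P (fifExt y P g.1) ↑u =
        α (fifIdx y ↑u) * (g.1 ⟨fifInv L y P (fifIdx y ↑u) ↑u, hwK⟩) +
          q (fifIdx y ↑u) (fifInv L y P (fifIdx y ↑u) ↑u) := by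
      unfold fifT
      rw [hF, hext_eq g.1 _ hwK]
    rw [e1, e2, Real.dist_eq]
    have e3 : α (fifIdx y ↑u) * (f.1 ⟨fifInv L y P (fifIdx y ↑u) ↑u, hwK⟩) +
          q (fifIdx y ↑u) (fifInv L y P (fifIdx y ↑u) ↑u) -
        (α (fifIdx y ↑u) * (g.1 ⟨fifInv L y P (fifIdx y ↑u) ↑u, hwK⟩) +
          q (fifIdx y ↑u) (fifInv L y P (fifIdx y ↑u) ↑u)) =
        α (fifIdx y ↑u) * ((f.1 ⟨fifInv L y P (fifIdx y ↑u) ↑u, hwK⟩) -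
          (g.1 ⟨fifInv L y P (fifIdx y ↑u) ↑u, hwK⟩)) := by ring
    rw [e3, abs_mul]
    have h5 : |f.1 ⟨fifInv L y P (fifIdx y ↑u) ↑u, hwK⟩ -
        g.1 ⟨fifInv L y P (fifIdx y ↑u) ↑u, hwK⟩| ≤ dist f g := by
      rw [← Real.dist_eq, Subtype.dist_eq]
      exact ContinuousMap.dist_apply_le_dist _
    exact mul_le_mul (hcb _ hi1 hiP) h5 (abs_nonneg _) hc0
  have hcw : ContractingWith ⟨c, hc0⟩ T := by
    constructor
    · exact_mod_cast hc1
    · exact LipschitzWith.of_dist_le_mul hdist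
  -- base point
  have hyP0 : y P - y 0 ≠ 0 := sub_ne_zero.mpr (ne_of_gt hy0P)
  have hg0c : Continuous (fun u : Set.Icc (y 0) (y P) =>
      z 0 + (z P - z 0) * ((u : ℝ) - y 0) / (y P - y 0)) := by
    apply Continuous.add continuous_const
    apply Continuous.div_const
    exact Continuous.mul continuous_const (Continuous.sub continuous_subtype_val continuous_const)
  have hg0S : (⟨(fun u : Set.Icc (y 0) (y P) =>
      z 0 + (z P - z 0) * ((u : ℝ) - y 0) / (y P - y 0)), hg0c⟩ :
      C(Set.Icc (y 0) (y P), ℝ)) ∈ S := by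
    constructor
    · show z 0 + (z P - z 0) * ((y 0) - y 0) / (y P - y 0) = z 0
      rw [sub_self]
      ring
    · show z 0 + (z P - z 0) * ((y P) - y 0) / (y P - y 0) = z P
      field_simp
      ring
  -- the fixed point
  obtain ⟨gfix, hgfix, -, -⟩ := hcw.exists_fixedPoint
    (⟨_, hg0S⟩ : S) (edist_ne_top _ _)
  have hgfix' : T gfix = gfix := hgfix
  have hgf0 : fifExt y P gfix.1 (y 0) = z 0 := by
    rw [hext_eq gfix.1 (y 0) hy0K]; exact gfix.2.1
  have hgfP : fifExt y P gfix.1 (y P) = z P := by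
    rw [hext_eq gfix.1 (y P) hyPK]; exact gfix.2.2
  refine ⟨fifExt y P gfix.1, ⟨hext_cont gfix.1, hgf0, hgfP, ?_⟩, ?_⟩
  · -- the functional equation
    intro p hp x hx
    obtain ⟨h1, h2⟩ := Finset.mem_Icc.mp hp
    have hLxAp : L p x ∈ Set.Icc (y (p - 1)) (y p) := (hbij p h1 h2).mapsTo hx
    have hLxK : L p x ∈ Set.Icc (y 0) (y P) := hApK p h1 h2 hLxAp
    have hfixeq : fifT F L y P (fifExt y P gfix.1) (L p x) = fifExt y P gfix.1 (L p x) := by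
      have h6 := hT gfix ⟨L p x, hLxK⟩
      rw [hgfix'] at h6
      rw [← h6, hext_eq gfix.1 (L p x) hLxK]
    rw [← hfixeq, hagree _ hgf0 hgfP p (L p x) h1 h2 hLxAp, hinv_left p h1 h2 x hx]
  · -- uniqueness
    rintro g' ⟨hg'c, hg'0, hg'P, hg'eq⟩
    set f' : C(Set.Icc (y 0) (y P), ℝ) :=
      ⟨(Set.Icc (y 0) (y P)).restrict g', continuousOn_iff_continuous_restrict.mp hg'c⟩
      with hf'def
    have hf'S : f' ∈ S := ⟨hg'0, hg'P⟩
    have hextg' : ∀ w (hw : w ∈ Set.Icc (y 0) (y P)), fifExt y P f' w = g' w :=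
      fun w hw => by rw [hext_eq f' w hw]; rfl
    have hfp : Function.IsFixedPt T ⟨f', hf'S⟩ := by
      apply Subtype.ext
      apply ContinuousMap.ext
      intro u
      rw [hT ⟨f', hf'S⟩ u]
      obtain ⟨hi1, hiP, hil, hir⟩ := hidx (u : ℝ) u.2.1 u.2.2
      have huA : (u : ℝ) ∈ Set.Icc (y (fifIdx y ↑u - 1)) (y (fifIdx y ↑u)) := ⟨hil, hir⟩
      obtain ⟨hwK, hLw⟩ := hinv_memK _ hi1 hiP _ huA
      rw [hagree _ (by rw [hextg' _ hy0K]; exact hg'0) (by rw [hextg' _ hyPK]; exact hg'P)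
        _ _ hi1 hiP huA]
      rw [hextg' _ hwK]
      have h7 := hg'eq (fifIdx y ↑u) (Finset.mem_Icc.mpr ⟨hi1, hiP⟩)
        (fifInv L y P (fifIdx y ↑u) ↑u) hwK
      rw [hLw] at h7
      exact h7.symm
    have huniq : (⟨f', hf'S⟩ : S) = gfix := hcw.fixedPoint_unique' hfp hgfix
    intro u hu
    have h8 := congrArg (fun t : S => (t : C(Set.Icc (y 0) (y P), ℝ)) ⟨u, hu⟩) huniq
    rw [hext_eq gfix.1 u hu]
    exact h8
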